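/- arXiv:1510.05162 — 10 statements merged into one kernel-verified Lean document; each statement's English description precedes it below -/
import Mathlib

section
/- If x is a constant-free formula over 𝒜, then its short-circuit evaluation tree se(x) is open. -/
/-- Formulas over a set of atoms `A`: x ::= T | a | ¬x | x ∧ y. -/
inductive Fm (A : Type) : Type where
  | tru : Fm A
  | atom : A → Fm A
  | neg : Fm A → Fm A
  | con : Fm A → Fm A → Fm A

/-- Trees over `A`: X ::= T | F | X ⊴ a ⊵ X. -/
inductive Tr (A : Type) : Type where
  | tt : Tr A
  | ff : Tr A
  | node : Tr A → A → Tr A → Tr A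

namespace Tr

/-- The substitution X[T ↦ Y, F ↦ Z]. -/
def subst {A : Type} : Tr A → Tr A → Tr A → Tr A
  | tt, Y, _ => Y
  | ff, _, Z => Z
  | node l a r, Y, Z => node (subst l Y Z) a (subst r Y Z)

/-- All leaves of the tree are T. -/
def closedT {A : Type} : Tr A → Prop
  | tt => True
  | ff => False
  | node l _ r => closedT l ∧ closedT r

/-- All leaves of the tree are F. -/
def closedF {A : Type} : Tr A → Prop
  | tt => False
  | ff => True
  | node l _ r => closedF l ∧ closedF r

/-- A tree is open if it is neither closed by T nor closed by F. -/
def IsOpen {A : Type} (X : Tr A) : Prop := ¬ closedT X ∧ ¬ closedF X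

/-- The tree has at least one T leaf. -/
def hasT {A : Type} : Tr A → Prop
  | tt => True
  | ff => False
  | node l _ r => hasT l ∨ hasT r

/-- The tree has at least one F leaf. -/
def hasF {A : Type} : Tr A → Prop
  | tt => False
  | ff => True
  | node l _ r => hasF l ∨ hasF r

end Tr

/-- A formula is constant-free if it contains no occurrence of T. -/
def Fm.constFree {A : Type} : Fm A → Prop
  | .tru => False
  | .atom _ => True
  | .neg x => x.constFree
  | .con x y => x.constFree ∧ y.constFree

/-- The short-circuit evaluation tree of a formula. -/
def se {A : Type} : Fm A → Tr A
  | .tru => .tt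
  | .atom a => .node .tt a .ff
  | .neg x => (se x).subst .ff .tt
  | .con x y => (se x).subst (se y) .ff

/-- A valuation algebra: a nonempty set of valuations together with an
evaluation `/ : 𝒜 × V → Bool` and a derivative `• : 𝒜 × V → V`. -/
structure ValAlg (A : Type) : Type 1 where
  V : Type
  nonempty : Nonempty V
  eval : A → V → Bool
  deriv : A → V → V

namespace ValAlg

variable {A : Type}

/-- Simultaneous extension of evaluation and derivative to formulas:
`ev u x H = (x/H, x•H)`. -/
def ev (u : ValAlg A) : Fm A → u.V → Bool × u.V
  | .tru, H => (true, H)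
  | .atom a, H => (u.eval a H, u.deriv a H)
  | .neg x, H => ((u.ev x H).1.not, (u.ev x H).2)
  | .con x y, H => if (u.ev x H).1 then u.ev y (u.ev x H).2 else (false, (u.ev x H).2)

/-- The evaluation `x/H` of a formula. -/
def fEval (u : ValAlg A) (x : Fm A) (H : u.V) : Bool := (u.ev x H).1

/-- The derivative `x•H` of a formula. -/
def fDeriv (u : ValAlg A) (x : Fm A) (H : u.V) : u.V := (u.ev x H).2

/-- Repetition-proof valuation algebra: a/(a•H) = a/H. -/
def RepProof (u : ValAlg A) : Prop :=
  ∀ a H, u.eval a (u.deriv a H) = u.eval a H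

/-- Contractive: repetition-proof and a•a•H = a•H. -/
def Contractive (u : ValAlg A) : Prop :=
  u.RepProof ∧ ∀ a H, u.deriv a (u.deriv a H) = u.deriv a H

/-- Memorizing: contractive and a/(b•a•H) = a/H, a•b•a•H = b•a•H. -/
def Memorizing (u : ValAlg A) : Prop :=
  u.Contractive ∧
    (∀ a b H, u.eval a (u.deriv b (u.deriv a H)) = u.eval a H) ∧
    (∀ a b H, u.deriv a (u.deriv b (u.deriv a H)) = u.deriv b (u.deriv a H))

/-- Static: memorizing and a/(b•H) = a/H. -/
def Static (u : ValAlg A) : Prop :=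
  u.Memorizing ∧ ∀ a b H, u.eval a (u.deriv b H) = u.eval a H

end ValAlg

/-- Valuation congruence with respect to a valuation algebra. -/
def VCongr {A : Type} (u : ValAlg A) (x y : Fm A) : Prop :=
  ∀ H : u.V, u.fEval x H = u.fEval y H ∧ u.fDeriv x H = u.fDeriv y H

/-- Satisfiability w.r.t. all valuation algebras. -/
def SATfr {A : Type} (x : Fm A) : Prop :=
  ∃ u : ValAlg A, ∃ H : u.V, u.fEval x H = true

/-- Satisfiability w.r.t. repetition-proof valuation algebras. -/
def SATrp {A : Type} (x : Fm A) : Prop :=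
  ∃ u : ValAlg A, u.RepProof ∧ ∃ H : u.V, u.fEval x H = true

/-- Satisfiability w.r.t. contractive valuation algebras. -/
def SATcn {A : Type} (x : Fm A) : Prop :=
  ∃ u : ValAlg A, u.Contractive ∧ ∃ H : u.V, u.fEval x H = true

/-- Satisfiability w.r.t. memorizing valuation algebras. -/
def SATmem {A : Type} (x : Fm A) : Prop :=
  ∃ u : ValAlg A, u.Memorizing ∧ ∃ H : u.V, u.fEval x H = true

/-- Satisfiability w.r.t. static valuation algebras. -/
def SATst {A : Type} (x : Fm A) : Prop :=
  ∃ u : ValAlg A, u.Static ∧ ∃ H : u.V, u.fEval x H = true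

/-- A valuation path: a finite sequence of pairs in 𝒜 × {T, F}. -/
abbrev VPath (A : Type) := List (A × Bool)

/-- The (partial) result `P : X` of a valuation path on a tree. -/
def result {A : Type} [DecidableEq A] : VPath A → Tr A → Option Bool
  | [], .tt => some true
  | [], .ff => some false
  | (u, b) :: Q, .node X₁ a X₂ =>
      if u = a then (if b then result Q X₁ else result Q X₂) else none
  | _ :: _, .tt => none
  | _ :: _, .ff => none
  | [], .node _ _ _ => none

/-- A path is repetition-proof if equal adjacent atoms carry equal values. -/
def RepProofPath {A : Type} : VPath A → Prop
  | (u, b) :: (v, c) :: t => (u = v → b = c) ∧ RepProofPath ((v, c) :: t)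
  | _ => True

/-- A path is memorizing if equal atoms anywhere carry equal values. -/
def MemPath {A : Type} (P : VPath A) : Prop :=
  ∀ u b c, (u, b) ∈ P → (u, c) ∈ P → b = c

/-- Free path-satisfiability. -/
def PathSatFr {A : Type} [DecidableEq A] (x : Fm A) : Prop :=
  ∃ P : VPath A, result P (se x) = some true

/-- Rp-path-satisfiability. -/
def PathSatRp {A : Type} [DecidableEq A] (x : Fm A) : Prop :=
  ∃ P : VPath A, RepProofPath P ∧ result P (se x) = some true

/-- Mem-path-satisfiability. -/
def PathSatMem {A : Type} [DecidableEq A] (x : Fm A) : Prop :=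
  ∃ P : VPath A, MemPath P ∧ result P (se x) = some true

/-- Free path-falsifiability. -/
def PathFalFr {A : Type} [DecidableEq A] (x : Fm A) : Prop :=
  ∃ P : VPath A, result P (se x) = some false

/-- The evaluation path `x ⋄ H`. -/
def ValAlg.epath {A : Type} (u : ValAlg A) : Fm A → u.V → VPath A
  | .tru, _ => []
  | .atom a, H => [(a, u.eval a H)]
  | .neg x, H => u.epath x H
  | .con x y, H =>
      if u.fEval x H then u.epath x H ++ u.epath y (u.fDeriv x H) else u.epath x H

/-- `lastIdx a P k` is the largest 1-based index `i ≤ min k |P|` with `uᵢ = a`,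
or 0 if no such index exists. -/
def lastIdx {A : Type} [DecidableEq A] (a : A) (P : VPath A) : ℕ → ℕ
  | 0 => 0
  | k + 1 => if (P[k]?).map Prod.fst = some a then k + 1 else lastIdx a P k

/-- The norm-based constructor `va`; the valuation `i : Fin (|P| + 1)`
represents the 1-based valuation `i + 1` of the paper. -/
def va {A : Type} [DecidableEq A] (P : VPath A) : ValAlg A where
  V := Fin (P.length + 1)
  nonempty := ⟨0⟩
  eval a i :=
    match lastIdx a P (i.1 + 1) with
    | 0 => false
    | j + 1 => ((P[j]?).map Prod.snd).getD false
  deriv a i :=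
    if h : i.1 < P.length ∧ (P[i.1]?).map Prod.fst = some a
    then ⟨i.1 + 1, by omega⟩ else i

/-- Helper for contraction: `cnAux a Q` drops leading repetitions of `a`. -/
def cnAux {A : Type} [DecidableEq A] : A → VPath A → VPath A
  | _, [] => []
  | a, (u, b) :: Q => if u = a then cnAux a Q else (u, b) :: cnAux u Q

/-- The contraction of a valuation path. -/
def cn {A : Type} [DecidableEq A] : VPath A → VPath A
  | [] => []
  | (u, b) :: Q => (u, b) :: cnAux u Q

/-- The norm-based constructor `sva`, a trivial valuation algebra. -/
def sva {A : Type} [DecidableEq A] (P : VPath A) : ValAlg A where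
  V := PUnit
  nonempty := ⟨PUnit.unit⟩
  eval a _ := decide ((a, true) ∈ P)
  deriv _ H := H

lemma subst_hasT_of_T {A : Type} : ∀ (X Y Z : Tr A), X.hasT → Y.hasT → (X.subst Y Z).hasT
  | .tt, _, _, _, hY => hY
  | .ff, _, _, hX, _ => hX.elim
  | .node l _ r, Y, Z, hX, hY => hX.imp (fun h => subst_hasT_of_T l Y Z h hY)
      (fun h => subst_hasT_of_T r Y Z h hY)

lemma subst_hasT_of_F {A : Type} : ∀ (X Y Z : Tr A), X.hasF → Z.hasT → (X.subst Y Z).hasT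
  | .tt, _, _, hX, _ => hX.elim
  | .ff, _, _, _, hZ => hZ
  | .node l _ r, Y, Z, hX, hZ => hX.imp (fun h => subst_hasT_of_F l Y Z h hZ)
      (fun h => subst_hasT_of_F r Y Z h hZ)

lemma subst_hasF_of_T {A : Type} : ∀ (X Y Z : Tr A), X.hasT → Y.hasF → (X.subst Y Z).hasF
  | .tt, _, _, _, hY => hY
  | .ff, _, _, hX, _ => hX.elim
  | .node l _ r, Y, Z, hX, hY => hX.imp (fun h => subst_hasF_of_T l Y Z h hY)
      (fun h => subst_hasF_of_T r Y Z h hY)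

lemma subst_hasF_of_F {A : Type} : ∀ (X Y Z : Tr A), X.hasF → Z.hasF → (X.subst Y Z).hasF
  | .tt, _, _, hX, _ => hX.elim
  | .ff, _, _, _, hZ => hZ
  | .node l _ r, Y, Z, hX, hZ => hX.imp (fun h => subst_hasF_of_F l Y Z h hZ)
      (fun h => subst_hasF_of_F r Y Z h hZ)

lemma se_hasT_hasF {A : Type} : ∀ (x : Fm A), x.constFree → (se x).hasT ∧ (se x).hasF
  | .tru, hx => hx.elim
  | .atom a, _ => ⟨Or.inl trivial, Or.inr trivial⟩
  | .neg x, hx => by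
      obtain ⟨hT, hF⟩ := se_hasT_hasF x hx
      exact ⟨subst_hasT_of_F _ _ _ hF trivial, subst_hasF_of_T _ _ _ hT trivial⟩
  | .con x y, hx => by
      obtain ⟨hxT, hxF⟩ := se_hasT_hasF x hx.1
      obtain ⟨hyT, hyF⟩ := se_hasT_hasF y hx.2
      exact ⟨subst_hasT_of_T _ _ _ hxT hyT, subst_hasF_of_F _ _ _ hxF trivial⟩

lemma not_closedT_of_hasF {A : Type} : ∀ (X : Tr A), X.hasF → ¬ X.closedT
  | .tt, h, _ => h
  | .ff, _, h => h
  | .node l _ r, hF, hC => hF.elim (fun h => not_closedT_of_hasF l h hC.1)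
      (fun h => not_closedT_of_hasF r h hC.2)

lemma not_closedF_of_hasT {A : Type} : ∀ (X : Tr A), X.hasT → ¬ X.closedF
  | .tt, _, h => h
  | .ff, h, _ => h
  | .node l _ r, hT, hC => hT.elim (fun h => not_closedF_of_hasT l h hC.1)
      (fun h => not_closedF_of_hasT r h hC.2)

/-- If `x` is a constant-free formula, then `se x` is open. -/
theorem stmt_1 {A : Type} (x : Fm A) (hx : x.constFree) : (se x).IsOpen := by
  obtain ⟨hT, hF⟩ := se_hasT_hasF x hx
  exact ⟨not_closedT_of_hasF _ hF, not_closedF_of_hasT _ hT⟩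
end

section
/- Let V be a static valuation algebra. Then for all formulas x, y and all H ∈ V: x/(y • H) = x/H. -/
section
variable {A : Type}

lemma atom_static (u : ValAlg A) (hu : u.Static) (a : A) :
    ∀ (y : Fm A) (H : u.V), u.eval a (u.fDeriv y H) = u.eval a H := by
  intro y
  induction y with
  | tru => intro H; rfl
  | atom b => intro H; exact hu.2 a b H
  | neg x ih => intro H; exact ih H
  | con x y ihx ihy =>
    intro H
    simp only [ValAlg.fDeriv, ValAlg.ev]
    by_cases h : (u.ev x H).1
    · simp only [h, if_true]
      have := ihy (u.fDeriv x H)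
      simp only [ValAlg.fDeriv] at this ⊢
      rw [this]; exact ihx H
    · simp only [h, if_false]; exact ihx H

lemma ev_congr (u : ValAlg A) (hu : u.Static) (x : Fm A) :
    ∀ H H' : u.V, (∀ a, u.eval a H = u.eval a H') →
      (u.ev x H).1 = (u.ev x H').1 ∧
      (∀ a, u.eval a (u.ev x H).2 = u.eval a (u.ev x H').2) := by
  induction x with
  | tru => intro H H' h; exact ⟨rfl, h⟩
  | atom b =>
    intro H H' h
    refine ⟨h b, fun a => ?_⟩
    have h1 := atom_static u hu a (.atom b) H
    have h2 := atom_static u hu a (.atom b) H'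
    simp only [ValAlg.fDeriv, ValAlg.ev] at h1 h2
    show u.eval a (u.deriv b H) = u.eval a (u.deriv b H')
    rw [h1, h2, h a]
  | neg x ih =>
    intro H H' h
    obtain ⟨h1, h2⟩ := ih H H' h
    exact ⟨by simp [ValAlg.ev, h1], h2⟩
  | con x y ihx ihy =>
    intro H H' h
    obtain ⟨h1, h2⟩ := ihx H H' h
    simp only [ValAlg.ev]
    by_cases hx : (u.ev x H).1
    · have hx' : (u.ev x H').1 = true := h1 ▸ hx
      simp only [hx, hx', if_true]
      exact ihy _ _ h2
    · have hx' : ¬ (u.ev x H').1 = true := h1 ▸ hx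
      simp only [hx, hx', if_false]
      exact ⟨rfl, h2⟩

end

theorem stmt_4' {A : Type} (u : ValAlg A) (hu : u.Static) (x y : Fm A) (H : u.V) :
    u.fEval x (u.fDeriv y H) = u.fEval x H :=
  (ev_congr u hu x _ _ (fun a => atom_static u hu a y H)).1

/-- In a static valuation algebra, `x/(y•H) = x/H` for all
formulas `x`, `y` and all valuations `H`. -/
theorem stmt_4 {A : Type} (u : ValAlg A) (hu : u.Static) (x y : Fm A) (H : u.V) :
    u.fEval x (u.fDeriv y H) = u.fEval x H := stmt_4' u hu x y H
end

section
/- Let (V, /, •) be a static valuation algebra and let H ∈ V be fixed. Then there exists a trivial valuation algebra ({H}, /₀, •₀) on the single valuation H such that x/H = x/₀H for every formula x. -/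
private lemma stmt5_key {A : Type} (u : ValAlg A) (hu : u.Static) (H : u.V)
    (x : Fm A) :
    ∀ G : u.V, (∀ a, u.eval a G = u.eval a H) →
      (u.ev x G).1 =
        ((ValAlg.mk {G : u.V // G = H} ⟨⟨H, rfl⟩⟩ (fun a _ => u.eval a H)
            (fun _ g => g)).ev x ⟨H, rfl⟩).1 ∧
      ∀ a, u.eval a (u.ev x G).2 = u.eval a H := by
  set t : ValAlg A := ValAlg.mk {G : u.V // G = H} ⟨⟨H, rfl⟩⟩
      (fun a _ => u.eval a H) (fun _ g => g) with ht
  induction x with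
  | tru => intro G hG; exact ⟨rfl, hG⟩
  | atom a =>
      intro G hG
      refine ⟨hG a, fun b => ?_⟩
      simp only [ValAlg.ev]
      rw [hu.2 b a G]; exact hG b
  | neg x ih =>
      intro G hG
      obtain ⟨h1, h2⟩ := ih G hG
      exact ⟨by simp [ValAlg.ev, h1], h2⟩
  | con x y ihx ihy =>
      intro G hG
      obtain ⟨h1, h2⟩ := ihx G hG
      have heq : (t.ev x ⟨H, rfl⟩).2 = (⟨H, rfl⟩ : {G : u.V // G = H}) :=
        Subtype.ext (t.ev x ⟨H, rfl⟩).2.2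
      obtain ⟨g1, g2⟩ := ihy (u.ev x G).2 h2
      by_cases hb : (u.ev x G).1 = true
      · constructor
        · simp only [ValAlg.ev, hb, if_true, ← h1, hb, heq]
          exact g1.trans (congrArg (fun g => (t.ev y g).1) heq).symm
        · simp only [ValAlg.ev, hb, if_true]
          exact g2
      · have hb' : (u.ev x G).1 = false := by
          cases hx : (u.ev x G).1 <;> simp_all
        constructor
        · simp only [ValAlg.ev, hb', ← h1, hb']
          simp
        · simp only [ValAlg.ev, hb']
          simpa using h2

/-- For a static valuation algebra and a fixed valuation `H`,
there is a trivial valuation algebra on the singleton `{H}` in which every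
formula evaluates as it does at `H` in the original algebra. -/
theorem stmt_5 {A : Type} (u : ValAlg A) (hu : u.Static) (H : u.V) :
    ∃ (e : A → {G : u.V // G = H} → Bool)
      (d : A → {G : u.V // G = H} → {G : u.V // G = H}),
      ∀ x : Fm A,
        (ValAlg.mk {G : u.V // G = H} ⟨⟨H, rfl⟩⟩ e d).fEval x ⟨H, rfl⟩ =
          u.fEval x H := by
  refine ⟨fun a _ => u.eval a H, fun _ g => g, fun x => ?_⟩
  exact ((stmt5_key u hu H x H (fun _ => rfl)).1).symm
end

section
/- Let X, Y, Y' be trees and let P, Q be valuation paths. If the result P : X is defined, say P : X = β ∈ {T, F}, then the result of P·Q on the substitution of X that replaces β-leaves by Y and (¬β)-leaves by Y' equals Q : Y; that is, (P·Q) : X[β↦Y, ¬β↦Y'] = Q : Y. -/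
/-- If `P : X = β`, then
`(P·Q) : X[β↦Y, ¬β↦Y'] = Q : Y`. -/
theorem stmt_9 {A : Type} [DecidableEq A] (X Y Y' : Tr A) (P Q : VPath A) (b : Bool)
    (h : result P X = some b) :
    result (P ++ Q) (if b then X.subst Y Y' else X.subst Y' Y) = result Q Y := by
  induction P generalizing X with
  | nil =>
    cases X with
    | tt => simp [result] at h; subst h; simp [Tr.subst]
    | ff => simp [result] at h; subst h; simp [Tr.subst]
    | node l a r => simp [result] at h
  | cons p P ih =>
    obtain ⟨u, c⟩ := p
    cases X with
    | tt => simp [result] at h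
    | ff => simp [result] at h
    | node l a r =>
      simp only [result] at h
      by_cases hu : u = a
      · subst hu
        simp only [if_pos rfl] at h
        cases c <;> cases b <;>
          simp_all [result, Tr.subst, List.cons_append, ih]
      · simp [hu] at h
end

section
/- Let X, Y, Y' be trees and P a valuation path. If P : X[T↦Y, F↦Y'] is defined, then there exist valuation paths R and Q with P = R·Q such that R : X is defined, and P : X[T↦Y, F↦Y'] = Q : Y if R : X = T and P : X[T↦Y, F↦Y'] = Q : Y' otherwise. -/
/-- If `P : X[T↦Y, F↦Y']` is defined, then `P` splits as `R·Q`
with `R : X` defined, and `P : X[T↦Y, F↦Y']` equals `Q : Y` if `R : X = T`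
and `Q : Y'` otherwise. -/
theorem stmt_11 {A : Type} [DecidableEq A] (X Y Y' : Tr A) (P : VPath A)
    (h : (result P (X.subst Y Y')).isSome) :
    ∃ (R Q : VPath A) (b : Bool), P = R ++ Q ∧ result R X = some b ∧
      result P (X.subst Y Y') = (if b then result Q Y else result Q Y') := by
  induction X generalizing P with
  | tt => exact ⟨[], P, true, rfl, rfl, rfl⟩
  | ff => exact ⟨[], P, false, rfl, rfl, rfl⟩
  | node l a r ihl ihr =>
    match P with
    | [] => simp [Tr.subst, result] at h
    | (u, c) :: Q =>
      simp only [Tr.subst, result] at h ⊢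
      by_cases hu : u = a
      · subst hu
        simp only [if_true] at h ⊢
        cases c with
        | true =>
          simp only [if_true] at h ⊢
          obtain ⟨R', Q', b, hPQ, hR, hres⟩ := ihl Q h
          exact ⟨(u, true) :: R', Q', b, by simp [hPQ],
            by simp [result, hR], hres⟩
        | false =>
          simp only [Bool.false_eq_true, if_false] at h ⊢
          obtain ⟨R', Q', b, hPQ, hR, hres⟩ := ihr Q h
          exact ⟨(u, false) :: R', Q', b, by simp [hPQ],
            by simp [result, hR], hres⟩
      · simp [hu] at h
end

section
/- Let V be a valuation algebra, x a formula and H ∈ V, and write x ⋄ H = ⟨(u₁, b₁), …, (uₙ, bₙ)⟩ for the evaluation path of x at H. Then for each 1 ≤ i ≤ n, bᵢ = uᵢ / (u_{i-1} • … • u₁ • H); in particular the i-th recorded truth value is the evaluation of the i-th recorded atom in the valuation obtained from H by applying the derivatives of the preceding recorded atoms. -/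
lemma epath_foldl_deriv {A : Type} (u : ValAlg A) (x : Fm A) (H : u.V) :
    (u.epath x H).foldl (fun G p => u.deriv p.1 G) H = u.fDeriv x H := by
  induction x generalizing H with
  | tru => rfl
  | atom a => rfl
  | neg x ih =>
      simp only [ValAlg.epath, ValAlg.fDeriv, ValAlg.ev]
      exact ih H
  | con x y ihx ihy =>
      simp only [ValAlg.epath, ValAlg.fDeriv, ValAlg.ev, ValAlg.fEval]
      by_cases h : (u.ev x H).1
      · simp only [h, if_true, List.foldl_append]
        rw [ihx H]; exact ihy _
      · simp only [h, Bool.false_eq_true, if_false]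
        exact ihx H

/-- In the evaluation path `x ⋄ H = ⟨(u₁,b₁),…,(uₙ,bₙ)⟩`, each
`bᵢ` equals `uᵢ / (u_{i-1} • … • u₁ • H)`. -/
theorem stmt_14 {A : Type} (u : ValAlg A) (x : Fm A) (H : u.V) :
    ∀ (i : ℕ) (h : i < (u.epath x H).length),
      ((u.epath x H).get ⟨i, h⟩).2 =
        u.eval ((u.epath x H).get ⟨i, h⟩).1
          (((u.epath x H).take i).foldl (fun G p => u.deriv p.1 G) H) := by
  induction x generalizing H with
  | tru => intro i h; simp [ValAlg.epath] at h
  | atom a =>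
      intro i h
      simp only [ValAlg.epath, List.length_singleton] at h
      obtain rfl : i = 0 := Nat.lt_one_iff.mp h
      rfl
  | neg x ih =>
      intro i h
      simp only [ValAlg.epath] at h ⊢
      exact ih H i h
  | con x y ihx ihy =>
      intro i
      simp only [ValAlg.epath]
      by_cases hx : u.fEval x H
      · rw [if_pos hx]
        intro h
        by_cases hi : i < (u.epath x H).length
        · rw [List.get_eq_getElem, List.getElem_append_left hi, List.take_append_of_le_length (le_of_lt hi)]
          exact ihx H i hi
        · push_neg at hi
          have hlen : i - (u.epath x H).length < (u.epath y (u.fDeriv x H)).length := by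
            simp [List.length_append] at h; omega
          have hget : ((u.epath x H ++ u.epath y (u.fDeriv x H)).get ⟨i, h⟩) =
              (u.epath y (u.fDeriv x H)).get ⟨i - (u.epath x H).length, hlen⟩ := by
            rw [List.get_eq_getElem, List.get_eq_getElem, List.getElem_append_right hi] <;> omega
          rw [hget]
          have htake : (u.epath x H ++ u.epath y (u.fDeriv x H)).take i =
              u.epath x H ++ (u.epath y (u.fDeriv x H)).take (i - (u.epath x H).length) := by
            rw [List.take_append]
            congr 1
            rw [List.take_of_length_le hi]
          rw [htake, List.foldl_append, epath_foldl_deriv]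
          exact ihy (u.fDeriv x H) _ hlen
      · rw [if_neg hx]
        intro h
        exact ihx H i h
end

section
/- Let V be a valuation algebra. Then for every formula x and every H ∈ V, the result of the evaluation path x ⋄ H on the tree se(x) equals the evaluation of x at H; that is, (x ⋄ H) : se(x) = x/H. -/
lemma result_subst {A : Type} [DecidableEq A] (X : Tr A) (P Q : VPath A) (Y Z : Tr A)
    (b : Bool) (h : result P X = some b) :
    result (P ++ Q) (X.subst Y Z) = if b then result Q Y else result Q Z := by
  induction X generalizing P with
  | tt =>
    cases P with
    | nil => simp [result] at h; subst h; simp [Tr.subst, result]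
    | cons p t => simp [result] at h
  | ff =>
    cases P with
    | nil => simp [result] at h; subst h; simp [Tr.subst, result]
    | cons p t => simp [result] at h
  | node l a r ihl ihr =>
    cases P with
    | nil => simp [result] at h
    | cons p t =>
      obtain ⟨u, c⟩ := p
      simp only [result, Tr.subst, List.cons_append] at h ⊢
      by_cases hu : u = a
      · simp only [hu, if_true] at h ⊢
        cases c
        · simpa using ihr t h
        · simpa using ihl t h
      · simp [hu] at h

/-- `(x ⋄ H) : se x = x/H`. -/
theorem stmt_15 {A : Type} [DecidableEq A] (u : ValAlg A) (x : Fm A) (H : u.V) :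
    result (u.epath x H) (se x) = some (u.fEval x H) := by
  induction x generalizing H with
  | tru => simp [ValAlg.epath, se, result, ValAlg.fEval, ValAlg.ev]
  | atom a =>
    simp only [ValAlg.epath, se, ValAlg.fEval, ValAlg.ev, result, if_true]
    cases u.eval a H <;> simp [result]
  | neg x ih =>
    have := ih H
    have h2 : result (u.epath x H ++ []) ((se x).subst .ff .tt)
        = if u.fEval x H then result [] Tr.ff else result [] Tr.tt :=
      result_subst _ _ _ _ _ _ this
    simp only [List.append_nil] at h2
    simp only [ValAlg.epath, se, h2, ValAlg.fEval, ValAlg.ev]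
    rcases Bool.eq_false_or_eq_true (u.ev x H).1 with hx | hx <;> simp [hx, result]
  | con x y ihx ihy =>
    by_cases hx : u.fEval x H
    · have h2 := result_subst (se x) (u.epath x H) (u.epath y (u.fDeriv x H))
        (se y) .ff _ (ihx H)
      simp only [hx, if_true] at h2
      simp only [ValAlg.epath, se, hx, if_true, h2, ihy]
      simp only [ValAlg.fEval, ValAlg.ev, ValAlg.fDeriv]
      simp [ValAlg.fEval] at hx
      simp [hx]
    · have h2 := result_subst (se x) (u.epath x H) []
        (se y) .ff _ (ihx H)
      simp only [hx, if_false, List.append_nil, result] at h2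
      simp only [ValAlg.epath, se]
      rw [if_neg hx, h2]
      simp only [ValAlg.fEval, ValAlg.ev] at hx ⊢
      simp [hx]
end

section
/- Let x be a formula. (a) If SAT_fr(x), then PathSat_fr(x). (b) If SAT_rp(x), then PathSat_rp(x). (c) If SAT_mem(x), then PathSat_mem(x). -/
section Aux

variable {A : Type}

lemma subst_subst (X Y Z Y' Z' : Tr A) :
    (X.subst Y' Z').subst Y Z = X.subst (Y'.subst Y Z) (Z'.subst Y Z) := by
  induction X with
  | tt => rfl
  | ff => rfl
  | node l a r ihl ihr => simp [Tr.subst, ihl, ihr]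

lemma subst_tt_ff (X : Tr A) : X.subst .tt .ff = X := by
  induction X with
  | tt => rfl
  | ff => rfl
  | node l a r ihl ihr => simp [Tr.subst, ihl, ihr]

lemma fEval_con (u : ValAlg A) (x y : Fm A) (H : u.V) :
    u.fEval (.con x y) H =
      if u.fEval x H then u.fEval y (u.fDeriv x H) else false := by
  simp only [ValAlg.fEval, ValAlg.fDeriv, ValAlg.ev]
  split <;> simp_all

lemma fDeriv_con_true (u : ValAlg A) (x y : Fm A) (H : u.V) (h : u.fEval x H = true) :
    u.fDeriv (.con x y) H = u.fDeriv y (u.fDeriv x H) := by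
  simp only [ValAlg.fEval] at h
  simp only [ValAlg.fDeriv, ValAlg.ev, h, if_true]

lemma key [DecidableEq A] (u : ValAlg A) :
    ∀ (x : Fm A) (H : u.V) (Q : VPath A) (Y Z : Tr A),
      result (u.epath x H ++ Q) ((se x).subst Y Z) =
        if u.fEval x H then result Q Y else result Q Z := by
  intro x
  induction x with
  | tru => intro H Q Y Z; simp [ValAlg.epath, se, Tr.subst, ValAlg.fEval, ValAlg.ev]
  | atom a =>
      intro H Q Y Z
      simp only [ValAlg.epath, se, Tr.subst, ValAlg.fEval, ValAlg.ev, List.cons_append,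
        List.nil_append, result, if_pos rfl]
      simp [result]
      rfl
  | neg x ih =>
      intro H Q Y Z
      have : (se (Fm.neg x)).subst Y Z = (se x).subst Z Y := by
        simp [se, subst_subst, Tr.subst]
      rw [this]
      have hep : u.epath (.neg x) H = u.epath x H := rfl
      rw [hep, ih H Q Z Y]
      have hev : u.fEval (.neg x) H = !(u.fEval x H) := rfl
      rw [hev]
      cases u.fEval x H <;> simp
  | con x y ihx ihy =>
      intro H Q Y Z
      have hse : (se (Fm.con x y)).subst Y Z = (se x).subst ((se y).subst Y Z) Z := by
        simp [se, subst_subst, Tr.subst]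
      rw [hse]
      rw [fEval_con]
      by_cases h : u.fEval x H = true
      · have hep : u.epath (.con x y) H = u.epath x H ++ u.epath y (u.fDeriv x H) := by
          simp [ValAlg.epath, h]
        rw [hep, List.append_assoc, ihx H _ _ _, if_pos h, ihy, h]; simp
      · have h' : u.fEval x H = false := by
          cases hv : u.fEval x H
          · rfl
          · exact absurd hv h
        have hep : u.epath (.con x y) H = u.epath x H := by
          simp [ValAlg.epath, h']
        rw [hep, ihx H Q _ Z, h']
        simp

/-- `Trace u H P`: the path `P` is the record of successive evaluations from `H`. -/
def Trace (u : ValAlg A) : u.V → VPath A → Prop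
  | _, [] => True
  | H, (a, b) :: Q => b = u.eval a H ∧ Trace u (u.deriv a H) Q

lemma trace_epath (u : ValAlg A) :
    ∀ (x : Fm A) (H : u.V) (Q : VPath A),
      Trace u (u.fDeriv x H) Q → Trace u H (u.epath x H ++ Q) := by
  intro x
  induction x with
  | tru => intro H Q h; exact h
  | atom a =>
      intro H Q h
      exact ⟨rfl, h⟩
  | neg x ih =>
      intro H Q h
      exact ih H Q h
  | con x y ihx ihy =>
      intro H Q h
      by_cases hx : u.fEval x H = true
      · have hep : u.epath (.con x y) H = u.epath x H ++ u.epath y (u.fDeriv x H) := by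
          simp [ValAlg.epath, hx]
        rw [hep, List.append_assoc]
        apply ihx
        apply ihy
        rwa [← fDeriv_con_true u x y H hx]
      · have h' : u.fEval x H = false := by
          cases hv : u.fEval x H
          · rfl
          · exact absurd hv hx
        have hep : u.epath (.con x y) H = u.epath x H := by
          simp [ValAlg.epath, h']
        rw [hep]
        apply ihx
        have : u.fDeriv (.con x y) H = u.fDeriv x H := by
          simp only [ValAlg.fEval] at h'
          simp [ValAlg.fDeriv, ValAlg.ev, h']
        rwa [← this]

lemma rp_of_trace (u : ValAlg A) (hrp : u.RepProof) :
    ∀ (P : VPath A) (H : u.V), Trace u H P → RepProofPath P := by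
  intro P
  induction P with
  | nil => intro H _; trivial
  | cons p Q ih =>
      intro H hT
      obtain ⟨a, b⟩ := p
      obtain ⟨hb, hQ⟩ := hT
      match Q, hQ with
      | [], _ => trivial
      | (c, d) :: t, hQ =>
          refine ⟨?_, ih (u.deriv a H) hQ⟩
          intro hac
          subst hac
          obtain ⟨hd, _⟩ := hQ
          rw [hb, hd, hrp a H]

lemma mem_all (u : ValAlg A) (hm : u.Memorizing) :
    ∀ (P : VPath A) (H : u.V) (a : A), Trace u (u.deriv a H) P →
      ∀ b, (a, b) ∈ P → b = u.eval a H := by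
  intro P
  induction P with
  | nil => intro H a _ b hb; simp at hb
  | cons p Q ih =>
      intro H a hT b hb
      obtain ⟨c, d⟩ := p
      obtain ⟨hd, hQ⟩ := hT
      rcases List.mem_cons.mp hb with h | h
      · cases h
        rw [hd, hm.1.1 a H]
      · -- (a,b) ∈ Q, and Trace u (u.deriv c (u.deriv a H)) Q
        set K := u.deriv c (u.deriv a H) with hK
        have hKfix : u.deriv a K = K := hm.2.2 a c H
        have hKeval : u.eval a K = u.eval a H := hm.2.1 a c H
        have hQ' : Trace u (u.deriv a K) Q := by rwa [hKfix]
        rw [← hKeval]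
        exact ih K a hQ' b h

lemma mem_of_trace (u : ValAlg A) (hm : u.Memorizing) :
    ∀ (P : VPath A) (H : u.V), Trace u H P → MemPath P := by
  intro P
  induction P with
  | nil => intro H _ a b c hb _; simp at hb
  | cons p Q ih =>
      intro H hT a b c hb hc
      obtain ⟨d, e⟩ := p
      obtain ⟨he, hQ⟩ := hT
      rcases List.mem_cons.mp hb with h1 | h1 <;> rcases List.mem_cons.mp hc with h2 | h2
      · cases h1; cases h2; rfl
      · cases h1
        have := mem_all u hm Q H a hQ c h2
        rw [he, this]
      · cases h2
        have := mem_all u hm Q H a hQ b h1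
        rw [he, this]
      · exact ih (u.deriv d H) hQ a b c h1 h2

lemma result_epath [DecidableEq A] (u : ValAlg A) (x : Fm A) (H : u.V)
    (h : u.fEval x H = true) : result (u.epath x H) (se x) = some true := by
  have := key u x H [] .tt .ff
  rw [subst_tt_ff, List.append_nil] at this
  rw [this, h]
  rfl

end Aux

/-- SAT implies PathSat, for fr, rp and mem. -/
theorem stmt_17 {A : Type} [DecidableEq A] (x : Fm A) :
    (SATfr x → PathSatFr x) ∧ (SATrp x → PathSatRp x) ∧
    (SATmem x → PathSatMem x) := by
  refine ⟨?_, ?_, ?_⟩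
  · rintro ⟨u, H, h⟩
    exact ⟨u.epath x H, result_epath u x H h⟩
  · rintro ⟨u, hrp, H, h⟩
    refine ⟨u.epath x H, ?_, result_epath u x H h⟩
    have hT : Trace u H (u.epath x H ++ []) := trace_epath u x H [] trivial
    rw [List.append_nil] at hT
    exact rp_of_trace u hrp _ H hT
  · rintro ⟨u, hm, H, h⟩
    refine ⟨u.epath x H, ?_, result_epath u x H h⟩
    have hT : Trace u H (u.epath x H ++ []) := trace_epath u x H [] trivial
    rw [List.append_nil] at hT
    exact mem_of_trace u hm _ H hT
end

section
/- Let x be a formula and P a valuation path such that P : se(x) is defined. (a) In the valuation algebra va(P), x/1 = P : se(x). (b) If P is repetition-proof, then in cva(P) := va(cn(P)), x/1 = P : se(x). (c) If P is memorizing, then in sva(P), x/1 = P : se(x). -/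
section Stmt18Aux

variable {A : Type} [DecidableEq A]

private lemma lt_of_get?' {α : Type} {l : List α} {n : ℕ} {a : α}
    (h : l[n]? = some a) : n < l.length := by
  by_contra hn
  rw [List.getElem?_eq_none (by omega)] at h
  simp at h

private lemma get?_drop' {α : Type} (l : List α) (n : ℕ) :
    l[n]? = (l.drop n)[0]? := by
  simp [List.getElem?_drop]

/-- Partial walk: the leaf value reached and the remaining path. -/
def walk : VPath A → Tr A → Option (Bool × VPath A)
  | Q, .tt => some (true, Q)
  | Q, .ff => some (false, Q)
  | [], .node _ _ _ => none
  | (u, c) :: Q, .node l a r =>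
      if u = a then walk Q (if c then l else r) else none

lemma walk_tt (Q : VPath A) : walk Q Tr.tt = some (true, Q) := by
  rcases Q with _ | ⟨⟨u, c⟩, Q⟩ <;> rfl

lemma walk_ff (Q : VPath A) : walk Q Tr.ff = some (false, Q) := by
  rcases Q with _ | ⟨⟨u, c⟩, Q⟩ <;> rfl

lemma walk_subst (Q : VPath A) (X Y Z : Tr A) :
    walk Q (X.subst Y Z) = (walk Q X).bind (fun p => walk p.2 (if p.1 then Y else Z)) := by
  induction Q generalizing X with
  | nil =>
    cases X with
    | tt => simp [walk, Tr.subst]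
    | ff => simp [walk, Tr.subst]
    | node l a r => simp [walk, Tr.subst]
  | cons p Q ih =>
    obtain ⟨u, c⟩ := p
    cases X with
    | tt => simp [walk, Tr.subst]
    | ff => simp [walk, Tr.subst]
    | node l a r =>
      by_cases h : u = a
      · cases c <;> simp [walk, Tr.subst, h, ih]
      · simp [walk, Tr.subst, h]

lemma walk_of_result {Q : VPath A} {X : Tr A} {b : Bool}
    (h : result Q X = some b) : walk Q X = some (b, []) := by
  induction Q generalizing X with
  | nil =>
    cases X with
    | tt => simp [result] at h; simp [walk, h]
    | ff => simp [result] at h; simp [walk, h]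
    | node l a r => simp [result] at h
  | cons p Q ih =>
    obtain ⟨u, c⟩ := p
    cases X with
    | tt => simp [result] at h
    | ff => simp [result] at h
    | node l a r =>
      simp only [result] at h
      by_cases hu : u = a
      · subst hu
        rw [if_pos rfl] at h
        cases c
        · simpa [walk] using ih h
        · simpa [walk] using ih h
      · rw [if_neg hu] at h; exact absurd h (by simp)

/-- Generic simulation lemma: any invariant `Sim` between states of a
valuation algebra and path suffixes that is compatible with single steps
transfers `walk` results to formula evaluation. -/
lemma gen_sim (u : ValAlg A) (Sim : u.V → VPath A → Prop)
    (hstep : ∀ H a c Q, Sim H ((a, c) :: Q) → u.eval a H = c ∧ Sim (u.deriv a H) Q) :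
    ∀ (x : Fm A) (Q : VPath A) (H : u.V) (b : Bool) (R : VPath A),
      walk Q (se x) = some (b, R) → Sim H Q →
      (u.ev x H).1 = b ∧ Sim (u.ev x H).2 R := by
  intro x
  induction x with
  | tru =>
    intro Q H b R hw hs
    simp only [se, walk, Option.some.injEq, Prod.mk.injEq] at hw
    obtain ⟨hb, hR⟩ := hw
    subst hb; subst hR
    exact ⟨rfl, hs⟩
  | atom a =>
    intro Q H b R hw hs
    cases Q with
    | nil => simp [se, walk] at hw
    | cons p Q' =>
      obtain ⟨v, c⟩ := p
      simp only [se, walk] at hw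
      by_cases hv : v = a
      · subst hv
        rw [if_pos rfl] at hw
        have hst := hstep H v c Q' hs
        have hev : u.ev (.atom v) H = (u.eval v H, u.deriv v H) := rfl
        cases c
        · rw [show (if (false : Bool) then Tr.tt else Tr.ff) = Tr.ff from rfl,
            walk_ff, Option.some.injEq, Prod.mk.injEq] at hw
          obtain ⟨hb, hR⟩ := hw; subst hb; subst hR
          exact ⟨by rw [hev]; exact hst.1, by rw [hev]; exact hst.2⟩
        · rw [show (if (true : Bool) then Tr.tt else Tr.ff) = Tr.tt from rfl,
            walk_tt, Option.some.injEq, Prod.mk.injEq] at hw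
          obtain ⟨hb, hR⟩ := hw; subst hb; subst hR
          exact ⟨by rw [hev]; exact hst.1, by rw [hev]; exact hst.2⟩
      · rw [if_neg hv] at hw; exact absurd hw (by simp)
  | neg x ih =>
    intro Q H b R hw hs
    simp only [se] at hw
    rw [walk_subst, Option.bind_eq_some_iff] at hw
    obtain ⟨⟨c, S⟩, hwx, hw2⟩ := hw
    have hx := ih Q H c S hwx hs
    have hev : u.ev (.neg x) H = ((u.ev x H).1.not, (u.ev x H).2) := rfl
    cases c
    · dsimp only at hw2
      rw [show (if (false : Bool) then Tr.ff else Tr.tt) = Tr.tt from rfl,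
        walk_tt, Option.some.injEq, Prod.mk.injEq] at hw2
      obtain ⟨hb, hR⟩ := hw2; subst hb; subst hR
      refine ⟨?_, by rw [hev]; exact hx.2⟩
      rw [hev]
      show (!(u.ev x H).1) = true
      rw [hx.1]; rfl
    · dsimp only at hw2
      rw [show (if (true : Bool) then Tr.ff else Tr.tt) = Tr.ff from rfl,
        walk_ff, Option.some.injEq, Prod.mk.injEq] at hw2
      obtain ⟨hb, hR⟩ := hw2; subst hb; subst hR
      refine ⟨?_, by rw [hev]; exact hx.2⟩
      rw [hev]
      show (!(u.ev x H).1) = false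
      rw [hx.1]; rfl
  | con x y ihx ihy =>
    intro Q H b R hw hs
    simp only [se] at hw
    rw [walk_subst, Option.bind_eq_some_iff] at hw
    obtain ⟨⟨c, S⟩, hwx, hw2⟩ := hw
    have hx := ihx Q H c S hwx hs
    cases c with
    | true =>
      dsimp only at hw2
      rw [show (if (true : Bool) then se y else Tr.ff) = se y from rfl] at hw2
      have hy := ihy S (u.ev x H).2 b R hw2 hx.2
      have hev : u.ev (.con x y) H = u.ev y (u.ev x H).2 := by
        show (if (u.ev x H).1 then u.ev y (u.ev x H).2 else (false, (u.ev x H).2)) = _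
        rw [hx.1]; simp
      exact ⟨by rw [hev]; exact hy.1, by rw [hev]; exact hy.2⟩
    | false =>
      dsimp only at hw2
      rw [show (if (false : Bool) then se y else Tr.ff) = Tr.ff from rfl,
        walk_ff, Option.some.injEq, Prod.mk.injEq] at hw2
      obtain ⟨hb, hR⟩ := hw2; subst hb; subst hR
      have hev : u.ev (.con x y) H = (false, (u.ev x H).2) := by
        show (if (u.ev x H).1 then u.ev y (u.ev x H).2 else (false, (u.ev x H).2)) = _
        rw [hx.1]; simp
      exact ⟨by rw [hev], by rw [hev]; exact hx.2⟩

lemma va_eval_here (P : VPath A) (i : Fin (P.length + 1)) {a : A} {c : Bool}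
    (hget : P[i.1]? = some (a, c)) : (va P).eval a i = c := by
  have h1 : lastIdx a P (i.1 + 1) = i.1 + 1 := by
    have hc : (P[i.1]?).map Prod.fst = some a := by rw [hget]; rfl
    rw [lastIdx, if_pos hc]
  show (match lastIdx a P (i.1 + 1) with
        | 0 => false
        | j + 1 => ((P[j]?).map Prod.snd).getD false) = c
  rw [h1]
  show ((P[i.1]?).map Prod.snd).getD false = c
  rw [hget]; rfl

lemma va_deriv_here (P : VPath A) (i : Fin (P.length + 1)) {a : A} {c : Bool}
    (hget : P[i.1]? = some (a, c)) : ((va P).deriv a i).1 = i.1 + 1 := by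
  have hlt : i.1 < P.length := lt_of_get?' hget
  show (if h : i.1 < P.length ∧ (P[i.1]?).map Prod.fst = some a
        then (⟨i.1 + 1, by omega⟩ : Fin (P.length + 1)) else i).1 = i.1 + 1
  rw [dif_pos ⟨hlt, by rw [hget]; rfl⟩]

lemma va_deriv_stay (P : VPath A) (i : Fin (P.length + 1)) {a : A}
    (h : (P[i.1]?).map Prod.fst ≠ some a) : (va P).deriv a i = i := by
  show (if h : i.1 < P.length ∧ (P[i.1]?).map Prod.fst = some a
        then (⟨i.1 + 1, by omega⟩ : Fin (P.length + 1)) else i) = i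
  rw [dif_neg (by tauto)]

lemma va_eval_prev (P : VPath A) (i : Fin (P.length + 1)) {a : A} {c : Bool}
    (h0 : 1 ≤ i.1) (h1 : (P[i.1]?).map Prod.fst ≠ some a)
    (h2 : P[i.1 - 1]? = some (a, c)) : (va P).eval a i = c := by
  obtain ⟨j, hj⟩ : ∃ j, i.1 = j + 1 := ⟨i.1 - 1, by omega⟩
  have hj' : j = i.1 - 1 := by omega
  have hl : lastIdx a P (i.1 + 1) = i.1 := by
    rw [lastIdx, if_neg h1, hj, lastIdx, if_pos (by rw [hj', h2]; rfl)]
  show (match lastIdx a P (i.1 + 1) with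
        | 0 => false
        | j + 1 => ((P[j]?).map Prod.snd).getD false) = c
  rw [hl, hj]
  show ((P[j]?).map Prod.snd).getD false = c
  rw [hj', h2]; rfl

lemma cnAux_head (a : A) : ∀ (T : VPath A) (p : A × Bool),
    (cnAux a T)[0]? = some p → p.1 ≠ a := by
  intro T
  induction T with
  | nil => intro p h; simp [cnAux] at h
  | cons q T ih =>
    obtain ⟨u, c⟩ := q
    intro p h
    by_cases hu : u = a
    · simp only [cnAux, if_pos hu] at h
      exact ih p h
    · simp only [cnAux, if_neg hu, List.getElem?_cons_zero] at h
      obtain rfl : (u, c) = p := by simpa using h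
      simpa using hu

lemma rep_tail {p : A × Bool} {Q : VPath A} (h : RepProofPath (p :: Q)) :
    RepProofPath Q := by
  cases Q with
  | nil => trivial
  | cons q T =>
    obtain ⟨u, c⟩ := p; obtain ⟨v, d⟩ := q
    simp only [RepProofPath] at h
    exact h.2

lemma rep_head {u : A} {c d : Bool} {T : VPath A}
    (h : RepProofPath ((u, c) :: (u, d) :: T)) : c = d := by
  simp only [RepProofPath] at h
  first
  | exact h.1
  | exact h.1 (by trivial)

end Stmt18Aux

/-- If `P : se x` is defined then `x/1 = P : se x` in `va P`;
moreover in `cva P = va (cn P)` if `P` is repetition-proof, and in `sva P`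
if `P` is memorizing. (Valuation `1` of the paper is index `0` here.) -/
theorem stmt_18 {A : Type} [DecidableEq A] (x : Fm A) (P : VPath A) (b : Bool)
    (h : result P (se x) = some b) :
    (va P).fEval x (0 : Fin (P.length + 1)) = b ∧
    (RepProofPath P → (va (cn P)).fEval x (0 : Fin ((cn P).length + 1)) = b) ∧
    (MemPath P → (sva P).fEval x PUnit.unit = b) := by
  have hw := walk_of_result h
  refine ⟨?_, ?_, ?_⟩
  · -- Part (a): the algebra va P
    have hstep : ∀ (i : Fin (P.length + 1)) a c Q,
        (fun (i : Fin (P.length + 1)) Q => P.drop i.1 = Q) i ((a, c) :: Q) →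
        (va P).eval a i = c ∧
        (fun (i : Fin (P.length + 1)) Q => P.drop i.1 = Q) ((va P).deriv a i) Q := by
      intro i a c Q hs
      beta_reduce at hs
      have hget : P[i.1]? = some (a, c) := by
        rw [get?_drop' P i.1, hs]; rfl
      refine ⟨va_eval_here P i hget, ?_⟩
      simp only
      rw [va_deriv_here P i hget]
      have : P.drop (i.1 + 1) = (P.drop i.1).drop 1 := by
        rw [List.drop_drop]
      rw [this, hs]
      rfl
    have := gen_sim (va P) (fun (i : Fin (P.length + 1)) Q => P.drop i.1 = Q)
      hstep x P (0 : Fin (P.length + 1)) b [] hw (by simp)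
    exact this.1
  · -- Part (b): the algebra va (cn P)
    intro hrp
    set C := cn P with hC
    have hstep : ∀ (i : Fin (C.length + 1)) v c Q,
        (fun (i : Fin (C.length + 1)) Q =>
          RepProofPath Q ∧
            (C.drop i.1 = cn Q ∨
              ∃ a d, 1 ≤ i.1 ∧ C[i.1 - 1]? = some (a, d) ∧
                C.drop i.1 = cnAux a Q ∧ ∀ e T, Q = (a, e) :: T → e = d))
          i ((v, c) :: Q) →
        (va C).eval v i = c ∧
        (fun (i : Fin (C.length + 1)) Q =>
          RepProofPath Q ∧
            (C.drop i.1 = cn Q ∨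
              ∃ a d, 1 ≤ i.1 ∧ C[i.1 - 1]? = some (a, d) ∧
                C.drop i.1 = cnAux a Q ∧ ∀ e T, Q = (a, e) :: T → e = d))
          ((va C).deriv v i) Q := by
      intro i v c Q hs
      obtain ⟨hrep, hinv⟩ := hs
      have hrep' : RepProofPath Q := rep_tail hrep
      have hheadcond : ∀ e T, Q = (v, e) :: T → e = c := by
        intro e T hT; subst hT; exact (rep_head hrep).symm
      rcases hinv with hdrop | ⟨a, d, h1, h2, h3, h4⟩
      · -- previous state is a fresh contraction point
        have hdrop' : C.drop i.1 = (v, c) :: cnAux v Q := by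
          rw [hdrop]; rfl
        have hget : C[i.1]? = some (v, c) := by
          rw [get?_drop' C i.1, hdrop']; rfl
        have hdv : ((va C).deriv v i).1 = i.1 + 1 := va_deriv_here C i hget
        refine ⟨va_eval_here C i hget, hrep', Or.inr ⟨v, c, ?_, ?_, ?_, hheadcond⟩⟩
        · rw [hdv]; omega
        · rw [hdv]; simpa using hget
        · rw [hdv]
          have : C.drop (i.1 + 1) = (C.drop i.1).drop 1 := by rw [List.drop_drop]
          rw [this, hdrop']
          rfl
      · by_cases hva : v = a
        · -- repeated atom: the state does not move
          subst hva
          have hc : c = d := h4 c Q rfl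
          subst hc
          have h3' : C.drop i.1 = cnAux v Q := by
            rw [h3]; simp [cnAux]
          have hhead : (C[i.1]?).map Prod.fst ≠ some v := by
            intro hcon
            have h0 : C[i.1]? = (cnAux v Q)[0]? := by
              rw [get?_drop' C i.1, h3']
            cases hg : (cnAux v Q)[0]? with
            | none => rw [h0, hg] at hcon; simp at hcon
            | some p =>
              have hne := cnAux_head v Q p hg
              rw [h0, hg] at hcon
              simp only [Option.map_some, Option.some.injEq] at hcon
              exact hne hcon
          have hdv : (va C).deriv v i = i := va_deriv_stay C i hhead
          refine ⟨va_eval_prev C i h1 hhead h2, hrep', Or.inr ⟨v, c, ?_, ?_, ?_, ?_⟩⟩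
          · rw [hdv]; exact h1
          · rw [hdv]; exact h2
          · rw [hdv]; exact h3'
          · intro e T hT
            exact hheadcond e T hT
        · -- new atom after a contraction block
          have hdrop' : C.drop i.1 = (v, c) :: cnAux v Q := by
            rw [h3]; simp [cnAux, hva]
          have hget : C[i.1]? = some (v, c) := by
            rw [get?_drop' C i.1, hdrop']; rfl
          have hdv : ((va C).deriv v i).1 = i.1 + 1 := va_deriv_here C i hget
          refine ⟨va_eval_here C i hget, hrep', Or.inr ⟨v, c, ?_, ?_, ?_, hheadcond⟩⟩
          · rw [hdv]; omega
          · rw [hdv]; simpa using hget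
          · rw [hdv]
            have : C.drop (i.1 + 1) = (C.drop i.1).drop 1 := by rw [List.drop_drop]
            rw [this, hdrop']
            rfl
    have := gen_sim (va C)
      (fun (i : Fin (C.length + 1)) Q =>
        RepProofPath Q ∧
          (C.drop i.1 = cn Q ∨
            ∃ a d, 1 ≤ i.1 ∧ C[i.1 - 1]? = some (a, d) ∧
              C.drop i.1 = cnAux a Q ∧ ∀ e T, Q = (a, e) :: T → e = d))
      hstep x P (0 : Fin (C.length + 1)) b [] hw ⟨hrp, Or.inl (by simp [hC])⟩
    exact this.1
  · -- Part (c): the algebra sva P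
    intro hmem
    have hstep : ∀ (H : PUnit) v c Q,
        (fun (_ : PUnit) (Q : VPath A) => ∀ e ∈ Q, e ∈ P) H ((v, c) :: Q) →
        (sva P).eval v H = c ∧
        (fun (_ : PUnit) (Q : VPath A) => ∀ e ∈ Q, e ∈ P) ((sva P).deriv v H) Q := by
      intro H v c Q hs
      have hm : (v, c) ∈ P := hs _ List.mem_cons_self
      constructor
      · show decide ((v, true) ∈ P) = c
        cases c with
        | true => simpa using hm
        | false =>
          simp only [decide_eq_false_iff_not]
          intro hmem'
          exact absurd (hmem v true false hmem' hm) (by simp)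
      · intro e he
        exact hs e (List.mem_cons_of_mem _ he)
    have := gen_sim (sva P) (fun (_ : PUnit) (Q : VPath A) => ∀ e ∈ Q, e ∈ P)
      hstep x P PUnit.unit b [] hw (fun e he => he)
    exact this.1
end

section
/- Let x be a formula. (a) If PathSat_fr(x), then SAT_fr(x). (b) If PathSat_rp(x), then SAT_cn(x). (c) If PathSat_mem(x), then SAT_st(x). Consequently, SAT_rp(x) ⇔ SAT_cn(x) and SAT_mem(x) ⇔ SAT_st(x). -/
namespace Stmt19
variable {A : Type} [DecidableEq A]

lemma result_tt {P : VPath A} {r : Bool} (h : result P Tr.tt = some r) :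
    P = [] ∧ r = true := by
  cases P with
  | nil => have := h; simp [result] at this; exact ⟨rfl, this⟩
  | cons p Q => obtain ⟨u, b⟩ := p; simp [result] at h

lemma result_ff {P : VPath A} {r : Bool} (h : result P Tr.ff = some r) :
    P = [] ∧ r = false := by
  cases P with
  | nil => have := h; simp [result] at this; exact ⟨rfl, this⟩
  | cons p Q => obtain ⟨u, b⟩ := p; simp [result] at h

lemma result_atom {a : A} {P : VPath A} {r : Bool}
    (h : result P (Tr.node Tr.tt a Tr.ff) = some r) : P = [(a, r)] := by
  cases P with
  | nil => simp [result] at h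
  | cons p Q =>
    obtain ⟨u, b⟩ := p
    by_cases hu : u = a
    · subst hu
      simp only [result, if_pos rfl] at h
      cases b with
      | true => obtain ⟨h1, h2⟩ := result_tt h; simp [h1, ← h2]
      | false => obtain ⟨h1, h2⟩ := result_ff h; simp [h1, ← h2]
    · simp [result, hu] at h

lemma splitResult : ∀ (X : Tr A) (P : VPath A) {Y Z : Tr A} {r : Bool},
    result P (X.subst Y Z) = some r →
    ∃ P1 P2 b, P = P1 ++ P2 ∧ result P1 X = some b ∧
      result P2 (if b then Y else Z) = some r := by
  intro X
  induction X with
  | tt => intro P Y Z r h; exact ⟨[], P, true, rfl, rfl, by simpa [Tr.subst] using h⟩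
  | ff => intro P Y Z r h; exact ⟨[], P, false, rfl, rfl, by simpa [Tr.subst] using h⟩
  | node l a rr ihl ihr =>
    intro P Y Z r h
    cases P with
    | nil => simp [Tr.subst, result] at h
    | cons p Q =>
      obtain ⟨u, b⟩ := p
      by_cases hu : u = a
      · subst hu
        simp only [Tr.subst, result, if_pos rfl] at h
        cases b with
        | true =>
          obtain ⟨P1, P2, c, hQ, h1, h2⟩ := ihl Q h
          exact ⟨(u, true) :: P1, P2, c, by simp [hQ], by simp [result, h1], h2⟩
        | false =>
          obtain ⟨P1, P2, c, hQ, h1, h2⟩ := ihr Q h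
          exact ⟨(u, false) :: P1, P2, c, by simp [hQ], by simp [result, h1], h2⟩
      · simp [Tr.subst, result, hu] at h

lemma appendResult : ∀ (X : Tr A) (P1 : VPath A) {Y Z : Tr A} {P2 : VPath A} {b r : Bool},
    result P1 X = some b → result P2 (if b then Y else Z) = some r →
    result (P1 ++ P2) (X.subst Y Z) = some r := by
  intro X
  induction X with
  | tt => intro P1 Y Z P2 b r h1 h2
          obtain ⟨hP, hb⟩ := result_tt h1; subst hP; subst hb; simpa [Tr.subst] using h2
  | ff => intro P1 Y Z P2 b r h1 h2
          obtain ⟨hP, hb⟩ := result_ff h1; subst hP; subst hb; simpa [Tr.subst] using h2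
  | node l a rr ihl ihr =>
    intro P1 Y Z P2 b r h1 h2
    cases P1 with
    | nil => simp [result] at h1
    | cons p Q =>
      obtain ⟨u, c⟩ := p
      by_cases hu : u = a
      · subst hu
        simp only [result, if_pos rfl] at h1
        cases c with
        | true => simpa [Tr.subst, result] using ihl Q h1 h2
        | false => simpa [Tr.subst, result] using ihr Q h1 h2
      · simp [result, hu] at h1

end Stmt19
namespace Stmt19
section EvLemmas
variable {A : Type} (u : ValAlg A)

lemma ev_tru (H : u.V) : u.ev Fm.tru H = (true, H) := rfl
lemma ev_atom (a : A) (H : u.V) : u.ev (Fm.atom a) H = (u.eval a H, u.deriv a H) := rfl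
lemma ev_neg (x : Fm A) (H : u.V) : u.ev (Fm.neg x) H = ((u.ev x H).1.not, (u.ev x H).2) := rfl
lemma ev_con (x y : Fm A) (H : u.V) :
    u.ev (Fm.con x y) H =
      if (u.ev x H).1 then u.ev y (u.ev x H).2 else (false, (u.ev x H).2) := rfl

end EvLemmas

variable {A : Type} [DecidableEq A]

/-- The free list-based valuation algebra. -/
def freeAlg (A : Type) [DecidableEq A] : ValAlg A where
  V := VPath A
  nonempty := ⟨[]⟩
  eval a H := match H with
    | (u, b) :: _ => if u = a then b else false
    | [] => false
  deriv a H := match H with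
    | (u, _) :: T => if u = a then T else (u, false) :: T
    | [] => []

lemma freeSim : ∀ (x : Fm A) (P Q : VPath A) (r : Bool),
    result P (se x) = some r → (freeAlg A).ev x (P ++ Q) = (r, Q) := by
  intro x
  induction x with
  | tru =>
    intro P Q r h
    obtain ⟨hP, hr⟩ := result_tt (by simpa [se] using h)
    subst hP; subst hr; rfl
  | atom a =>
    intro P Q r h
    have hP := result_atom (by simpa [se] using h)
    subst hP
    simp [ev_atom, freeAlg]
  | neg x ih =>
    intro P Q r h
    obtain ⟨P1, P2, b, hP, h1, h2⟩ := splitResult (se x) P (by simpa [se] using h)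
    cases b with
    | true =>
      obtain ⟨hP2, hr⟩ := result_ff (by simpa using h2)
      subst hP2; subst hr
      simp only [List.append_nil] at hP; subst hP
      have := ih _ Q _ h1
      exact (ev_neg (freeAlg A) x (P ++ Q)).trans (congrArg (fun p : Bool × (freeAlg A).V => (p.1.not, p.2)) this)
    | false =>
      obtain ⟨hP2, hr⟩ := result_tt (by simpa using h2)
      subst hP2; subst hr
      simp only [List.append_nil] at hP; subst hP
      have := ih _ Q _ h1
      exact (ev_neg (freeAlg A) x (P ++ Q)).trans (congrArg (fun p : Bool × (freeAlg A).V => (p.1.not, p.2)) this)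
  | con x y ihx ihy =>
    intro P Q r h
    obtain ⟨P1, P2, b, hP, h1, h2⟩ := splitResult (se x) P (by simpa [se] using h)
    subst hP
    cases b with
    | true =>
      simp only [if_pos rfl] at h2
      rw [List.append_assoc]
      exact (ev_con (freeAlg A) x y (P1 ++ (P2 ++ Q))).trans ((congrArg (fun p : Bool × (freeAlg A).V => if p.1 then (freeAlg A).ev y p.2 else (false, p.2)) (ihx P1 (P2 ++ Q) true h1)).trans (ihy P2 Q r h2))
    | false =>
      obtain ⟨hP2, hr⟩ := result_ff (by simpa using h2)
      subst hP2; subst hr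
      have := ihx _ Q _ h1
      rw [List.append_nil]
      exact (ev_con (freeAlg A) x y (P1 ++ Q)).trans (congrArg (fun p : Bool × (freeAlg A).V => if p.1 then (freeAlg A).ev y p.2 else (false, p.2)) this)

/-- A static (history-free) valuation algebra from a fixed assignment. -/
def stAlg (A : Type) (e : A → Bool) : ValAlg A where
  V := PUnit
  nonempty := ⟨PUnit.unit⟩
  eval a _ := e a
  deriv _ H := H

lemma stAlg_static (e : A → Bool) : (stAlg A e).Static := by
  exact ⟨⟨⟨fun _ _ => rfl, fun _ _ => rfl⟩, fun _ _ _ => rfl, fun _ _ _ => rfl⟩, fun _ _ _ => rfl⟩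

lemma stSim (e : A → Bool) : ∀ (x : Fm A) (P : VPath A) (r : Bool),
    (∀ p ∈ P, e p.1 = p.2) → result P (se x) = some r →
    ∀ H, (stAlg A e).ev x H = (r, H) := by
  intro x
  induction x with
  | tru =>
    intro P r hc h H
    obtain ⟨hP, hr⟩ := result_tt (by simpa [se] using h)
    subst hr; rfl
  | atom a =>
    intro P r hc h H
    have hP := result_atom (by simpa [se] using h)
    subst hP
    have := hc (a, r) (by simp)
    exact (ev_atom (stAlg A e) a H).trans (Prod.ext this rfl)
  | neg x ih =>
    intro P r hc h H
    obtain ⟨P1, P2, b, hP, h1, h2⟩ := splitResult (se x) P (by simpa [se] using h)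
    subst hP
    have hc1 : ∀ p ∈ P1, e p.1 = p.2 := fun p hp => hc p (by simp [hp])
    cases b with
    | true =>
      obtain ⟨hP2, hr⟩ := result_ff (by simpa using h2)
      subst hr
      simp [ev_neg, ih P1 true hc1 h1 H]
    | false =>
      obtain ⟨hP2, hr⟩ := result_tt (by simpa using h2)
      subst hr
      simp [ev_neg, ih P1 false hc1 h1 H]
  | con x y ihx ihy =>
    intro P r hc h H
    obtain ⟨P1, P2, b, hP, h1, h2⟩ := splitResult (se x) P (by simpa [se] using h)
    subst hP
    have hc1 : ∀ p ∈ P1, e p.1 = p.2 := fun p hp => hc p (by simp [hp])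
    have hc2 : ∀ p ∈ P2, e p.1 = p.2 := fun p hp => hc p (by simp [hp])
    cases b with
    | true =>
      simp only [if_pos rfl] at h2
      simp [ev_con, ihx P1 true hc1 h1 H, ihy P2 r hc2 h2 H]
    | false =>
      obtain ⟨hP2, hr⟩ := result_ff (by simpa using h2)
      subst hr
      simp [ev_con, ihx P1 false hc1 h1 H]

end Stmt19
namespace Stmt19
set_option linter.unusedSectionVars false
section Trace
variable {A : Type} {u : ValAlg A}

lemma fEval_neg (x : Fm A) (H : u.V) : u.fEval (Fm.neg x) H = !(u.fEval x H) := rfl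
lemma fDeriv_neg (x : Fm A) (H : u.V) : u.fDeriv (Fm.neg x) H = u.fDeriv x H := rfl

lemma fEval_con (x y : Fm A) (H : u.V) :
    u.fEval (Fm.con x y) H =
      if u.fEval x H then u.fEval y (u.fDeriv x H) else false := by
  simp only [ValAlg.fEval, ValAlg.fDeriv, ValAlg.ev]
  by_cases hc : (u.ev x H).1 = true <;> simp [hc]

lemma fDeriv_con (x y : Fm A) (H : u.V) :
    u.fDeriv (Fm.con x y) H =
      if u.fEval x H then u.fDeriv y (u.fDeriv x H) else u.fDeriv x H := by
  simp only [ValAlg.fEval, ValAlg.fDeriv, ValAlg.ev]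
  by_cases hc : (u.ev x H).1 = true <;> simp [hc]

/-- The path `P` is exactly the observation trace from state `H` to state `K`. -/
inductive Trace (u : ValAlg A) : VPath A → u.V → u.V → Prop
  | nil (H : u.V) : Trace u [] H H
  | cons (a : A) (H K : u.V) (P : VPath A) :
      Trace u P (u.deriv a H) K → Trace u ((a, u.eval a H) :: P) H K

lemma trace_append {P Q : VPath A} {H K L : u.V}
    (h1 : Trace u P H K) (h2 : Trace u Q K L) : Trace u (P ++ Q) H L := by
  induction h1 with
  | nil => simpa using h2
  | cons a H K P h ih => exact Trace.cons a _ _ _ (ih h2)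

lemma epath_trace : ∀ (x : Fm A) (H : u.V), Trace u (u.epath x H) H (u.fDeriv x H) := by
  intro x
  induction x with
  | tru => intro H; exact Trace.nil H
  | atom a => intro H; exact Trace.cons a _ _ _ (Trace.nil _)
  | neg x ih => intro H; simpa [ValAlg.epath, fDeriv_neg] using ih H
  | con x y ihx ihy =>
    intro H
    by_cases hb : u.fEval x H
    · rw [ValAlg.epath, if_pos hb, fDeriv_con, if_pos hb]
      exact trace_append (ihx H) (ihy _)
    · rw [ValAlg.epath, if_neg hb, fDeriv_con, if_neg hb]
      exact ihx H

lemma trace_rp (hu : u.RepProof) {P : VPath A} {H K : u.V}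
    (h : Trace u P H K) : RepProofPath P := by
  induction h with
  | nil => trivial
  | cons a H K P h ih =>
    cases h with
    | nil => trivial
    | cons b H' K' P' h' =>
      refine ⟨?_, ih⟩
      rintro rfl
      exact (hu a H).symm

lemma trace_mem_aux (hu : u.Memorizing) :
    ∀ {P : VPath A} {H K : u.V} {a : A} {c : Bool},
      Trace u P H K → u.deriv a H = H → (a, c) ∈ P → c = u.eval a H := by
  intro P H K a c h
  induction h with
  | nil => intro _ hm; simp at hm
  | cons d H K P h ih =>
    intro hfix hm
    rcases List.mem_cons.mp hm with heq | hm'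
    · obtain ⟨rfl, rfl⟩ := Prod.mk.injEq .. ▸ heq
      rfl
    · -- state after head: d • H, with H = a • H (from hfix)
      have hH : H = u.deriv a H := hfix.symm
      have hfix' : u.deriv a (u.deriv d H) = u.deriv d H := by
        conv_lhs => rw [hH]
        conv_rhs => rw [hH]
        exact hu.2.2 a d H
      have := ih hfix' hm'
      rw [this]
      conv_lhs => rw [hH]
      exact hu.2.1 a d H

lemma trace_mem (hu : u.Memorizing) {P : VPath A} {H K : u.V}
    (h : Trace u P H K) : MemPath P := by
  induction h with
  | nil => intro a b c hb hc; simp at hb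
  | cons d H K P h ih =>
    intro a b c hb hc
    rcases List.mem_cons.mp hb with hb1 | hb2 <;> rcases List.mem_cons.mp hc with hc1 | hc2
    · rw [Prod.mk.injEq] at hb1 hc1
      rw [hb1.2, hc1.2]
    · obtain ⟨rfl, rfl⟩ := Prod.mk.injEq .. ▸ hb1
      have hfix : u.deriv a (u.deriv a H) = u.deriv a H := hu.1.2 a H
      have := trace_mem_aux hu h hfix hc2
      rw [this]
      exact (hu.1.1 a H).symm
    · obtain ⟨rfl, rfl⟩ := Prod.mk.injEq .. ▸ hc1
      have hfix : u.deriv a (u.deriv a H) = u.deriv a H := hu.1.2 a H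
      have := trace_mem_aux hu h hfix hb2
      rw [this]
      exact hu.1.1 a H
    · exact ih a b c hb2 hc2

end Trace

variable {A : Type} [DecidableEq A]

lemma epath_result (u : ValAlg A) : ∀ (x : Fm A) (H : u.V),
    result (u.epath x H) (se x) = some (u.fEval x H) := by
  intro x
  induction x with
  | tru => intro H; rfl
  | atom a =>
    intro H
    simp only [ValAlg.epath, se, ValAlg.fEval, ev_atom]
    cases u.eval a H <;> simp [result]
  | neg x ih =>
    intro H
    have h2 : result [] (if u.fEval x H then (Tr.ff : Tr A) else Tr.tt) = some (!(u.fEval x H)) := by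
      cases hb : u.fEval x H <;> simp [result]
    have := appendResult (se x) (u.epath x H) (ih H) h2
    simpa [se, ValAlg.epath, fEval_neg] using this
  | con x y ihx ihy =>
    intro H
    by_cases hb : u.fEval x H
    · have h2 : result (u.epath y (u.fDeriv x H)) (if u.fEval x H then se y else (Tr.ff : Tr A))
          = some (u.fEval y (u.fDeriv x H)) := by rw [if_pos hb]; exact ihy _
      have := appendResult (se x) (u.epath x H) (ihx H) h2
      rw [se, ValAlg.epath, if_pos hb, fEval_con, if_pos hb]
      exact this
    · have h2 : result [] (if u.fEval x H then se y else (Tr.ff : Tr A)) = some false := by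
        rw [if_neg hb]; rfl
      have := appendResult (se x) (u.epath x H) (ihx H) h2
      rw [se, ValAlg.epath, if_neg hb, fEval_con, if_neg hb]
      simpa using this

end Stmt19
namespace Stmt19
set_option linter.unusedSectionVars false
variable {A : Type} [DecidableEq A]

lemma dropWhile_head_false {α : Type*} (p : α → Bool) :
    ∀ (l : List α) {x : α} {xs : List α}, l.dropWhile p = x :: xs → p x = false := by
  intro l
  induction l with
  | nil => intro x xs h; simp [List.dropWhile] at h
  | cons y t ih =>
    intro x xs h
    rw [List.dropWhile] at h
    cases hp : p y with
    | true => rw [hp] at h; exact ih h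
    | false => rw [hp] at h; cases h; exact hp

lemma rpTail {p : A × Bool} {L : VPath A} (h : RepProofPath (p :: L)) :
    RepProofPath L := by
  obtain ⟨u, b⟩ := p
  cases L with
  | nil => trivial
  | cons q t => obtain ⟨v, c⟩ := q; exact h.2

lemma rpSuffix : ∀ (P : VPath A) {Q : VPath A}, RepProofPath (P ++ Q) → RepProofPath Q := by
  intro P
  induction P with
  | nil => intro Q h; exact h
  | cons p t ih => intro Q h; exact ih (rpTail h)

lemma rpRun : ∀ (Q : VPath A) (a : A) (c : Bool), RepProofPath ((a, c) :: Q) →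
    ∀ p ∈ Q.takeWhile (fun p => decide (p.1 = a)), p.2 = c := by
  intro Q
  induction Q with
  | nil => intro a c _ p hp; simp [List.takeWhile] at hp
  | cons q t ih =>
    intro a c h p hp
    obtain ⟨u, d⟩ := q
    by_cases hu : u = a
    · subst hu
      rw [List.takeWhile_cons, if_pos (by simp : decide ((u, d).1 = u) = true)] at hp
      have hdc : d = c := (h.1 rfl).symm
      rcases List.mem_cons.mp hp with h1 | h2
      · rw [h1, hdc]
      · subst hdc
        exact ih u d h.2 p h2
    · rw [List.takeWhile_cons,
        if_neg (by simp [hu] : ¬(decide ((u, d).1 = a) = true))] at hp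
      simp at hp

/-- The contractive valuation algebra: a memory plus a remaining path. -/
def cnAlg (A : Type) [DecidableEq A] : ValAlg A where
  V := (A → Bool) × VPath A
  nonempty := ⟨fun _ => false, []⟩
  eval a H :=
    match H.2 with
    | (v, c) :: _ => if v = a then c else H.1 a
    | [] => H.1 a
  deriv a H :=
    match H.2 with
    | (v, c) :: T =>
        if v = a then (Function.update H.1 a c, T.dropWhile (fun p => decide (p.1 = a)))
        else H
    | [] => H

lemma cnEval_nil (a : A) (f : A → Bool) : (cnAlg A).eval a (f, []) = f a := rfl
lemma cnEval_cons (a v : A) (c : Bool) (f : A → Bool) (T : VPath A) :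
    (cnAlg A).eval a (f, (v, c) :: T) = if v = a then c else f a := rfl
lemma cnDeriv_nil (a : A) (f : A → Bool) : (cnAlg A).deriv a (f, []) = (f, []) := rfl
lemma cnDeriv_cons (a v : A) (c : Bool) (f : A → Bool) (T : VPath A) :
    (cnAlg A).deriv a (f, (v, c) :: T) =
      if v = a then (Function.update f a c, T.dropWhile (fun p => decide (p.1 = a)))
      else (f, (v, c) :: T) := by
  by_cases hv : v = a <;> simp [cnAlg, hv]

/-- On a state whose path does not begin with `a`, evaluating `a` reads the memory
and derivation does nothing. -/
lemma cn_stuck (a : A) (f : A → Bool) (S : VPath A)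
    (hS : ∀ v c T, S = (v, c) :: T → v ≠ a) :
    (cnAlg A).eval a (f, S) = f a ∧ (cnAlg A).deriv a (f, S) = (f, S) := by
  cases S with
  | nil => exact ⟨rfl, rfl⟩
  | cons q T =>
    obtain ⟨v, c⟩ := q
    have hv : v ≠ a := hS v c T rfl
    rw [cnEval_cons, cnDeriv_cons, if_neg hv, if_neg hv]
    exact ⟨rfl, rfl⟩

lemma cn_drop_stuck (a : A) (f : A → Bool) (Q : VPath A) :
    (cnAlg A).eval a (f, Q.dropWhile (fun p => decide (p.1 = a))) = f a ∧
    (cnAlg A).deriv a (f, Q.dropWhile (fun p => decide (p.1 = a))) =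
      (f, Q.dropWhile (fun p => decide (p.1 = a))) := by
  apply cn_stuck
  intro v c T hT
  have := dropWhile_head_false (fun p => decide (p.1 = a)) Q hT
  simpa using this

lemma cnAlg_contractive : (cnAlg A).Contractive := by
  constructor
  · intro a H
    obtain ⟨f, S⟩ := H
    cases S with
    | nil => rfl
    | cons q T =>
      obtain ⟨v, c⟩ := q
      rw [cnDeriv_cons]
      by_cases hv : v = a
      · rw [if_pos hv, (cn_drop_stuck a _ T).1, cnEval_cons, if_pos hv, Function.update_self]
      · rw [if_neg hv]
  · intro a H
    obtain ⟨f, S⟩ := H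
    cases S with
    | nil => rfl
    | cons q T =>
      obtain ⟨v, c⟩ := q
      rw [cnDeriv_cons]
      by_cases hv : v = a
      · rw [if_pos hv, (cn_drop_stuck a _ T).2]
      · rw [if_neg hv, cnDeriv_cons, if_neg hv]

/-- The state `(f, S)` simulates the remaining path `Q`. -/
def Rel (f : A → Bool) (S Q : VPath A) : Prop :=
  S = Q ∨ ∃ a, S = Q.dropWhile (fun p => decide (p.1 = a)) ∧
    ∀ p ∈ Q.takeWhile (fun p => decide (p.1 = a)), p.2 = f a

lemma relStep {f : A → Bool} {S Q : VPath A} {a : A} {r : Bool}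
    (hrp : RepProofPath ((a, r) :: Q)) (hrel : Rel f S ((a, r) :: Q)) :
    ∃ f' S', (cnAlg A).eval a (f, S) = r ∧ (cnAlg A).deriv a (f, S) = (f', S') ∧
      Rel f' S' Q := by
  have main : S = (a, r) :: Q →
      ∃ f' S', (cnAlg A).eval a (f, S) = r ∧ (cnAlg A).deriv a (f, S) = (f', S') ∧
        Rel f' S' Q := by
    rintro rfl
    refine ⟨Function.update f a r, Q.dropWhile (fun p => decide (p.1 = a)), ?_, ?_, ?_⟩
    · rw [cnEval_cons, if_pos rfl]
    · rw [cnDeriv_cons, if_pos rfl]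
    · refine Or.inr ⟨a, rfl, ?_⟩
      intro p hp
      rw [Function.update_self]
      exact rpRun Q a r hrp p hp
  rcases hrel with rfl | ⟨a₀, hS, hTW⟩
  · exact main rfl
  · by_cases ha : a = a₀
    · subst ha
      rw [List.dropWhile_cons, if_pos (by simp : decide ((a, r).1 = a) = true)] at hS
      have hmem : (a, r) ∈ List.takeWhile (fun p => decide (p.1 = a)) ((a, r) :: Q) := by
        rw [List.takeWhile_cons, if_pos (by simp : decide ((a, r).1 = a) = true)]
        exact List.mem_cons_self
      have hfa : r = f a := hTW (a, r) hmem
      subst hS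
      obtain ⟨he, hd⟩ := cn_drop_stuck a f Q
      refine ⟨f, _, by rw [he, hfa], hd, Or.inr ⟨a, rfl, ?_⟩⟩
      intro p hp
      apply hTW
      rw [List.takeWhile_cons, if_pos (by simp : decide ((a, r).1 = a) = true)]
      exact List.mem_cons_of_mem _ hp
    · rw [List.dropWhile_cons,
        if_neg (by simp [ha] : ¬(decide ((a, r).1 = a₀) = true))] at hS
      exact main hS
end Stmt19

namespace Stmt19
set_option linter.unusedSectionVars false
variable {A : Type} [DecidableEq A]

lemma cnSim : ∀ (x : Fm A) (P Q : VPath A) (f : A → Bool) (S : VPath A) (r : Bool),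
    result P (se x) = some r → RepProofPath (P ++ Q) → Rel f S (P ++ Q) →
    ∃ f' S', (cnAlg A).ev x (f, S) = (r, (f', S')) ∧ Rel f' S' Q := by
  intro x
  induction x with
  | tru =>
    intro P Q f S r h hrp hrel
    obtain ⟨hP, hr⟩ := result_tt (by simpa [se] using h)
    subst hP; subst hr
    exact ⟨f, S, rfl, by simpa using hrel⟩
  | atom a =>
    intro P Q f S r h hrp hrel
    have hP := result_atom (by simpa [se] using h)
    subst hP
    simp only [List.cons_append, List.nil_append] at hrp hrel
    obtain ⟨f', S', he, hd, hrel'⟩ := relStep hrp hrel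
    exact ⟨f', S', by rw [ev_atom (cnAlg A) a (f, S), he, hd]; rfl, hrel'⟩
  | neg x ih =>
    intro P Q f S r h hrp hrel
    obtain ⟨P1, P2, b, hP, h1, h2⟩ := splitResult (se x) P (by simpa [se] using h)
    subst hP
    cases b with
    | true =>
      obtain ⟨hP2, hr⟩ := result_ff (by simpa using h2)
      subst hP2; subst hr
      simp only [List.append_nil] at hrp hrel
      obtain ⟨f', S', hev, hrel'⟩ := ih P1 Q f S true h1 hrp hrel
      exact ⟨f', S', by rw [ev_neg (cnAlg A) x (f, S), hev]; rfl, hrel'⟩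
    | false =>
      obtain ⟨hP2, hr⟩ := result_tt (by simpa using h2)
      subst hP2; subst hr
      simp only [List.append_nil] at hrp hrel
      obtain ⟨f', S', hev, hrel'⟩ := ih P1 Q f S false h1 hrp hrel
      exact ⟨f', S', by rw [ev_neg (cnAlg A) x (f, S), hev]; rfl, hrel'⟩
  | con x y ihx ihy =>
    intro P Q f S r h hrp hrel
    obtain ⟨P1, P2, b, hP, h1, h2⟩ := splitResult (se x) P (by simpa [se] using h)
    subst hP
    cases b with
    | true =>
      rw [if_pos rfl] at h2
      rw [List.append_assoc] at hrp hrel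
      obtain ⟨f1, S1, hev1, hrel1⟩ := ihx P1 (P2 ++ Q) f S true h1 hrp hrel
      obtain ⟨f2, S2, hev2, hrel2⟩ := ihy P2 Q f1 S1 r h2 (rpSuffix P1 hrp) hrel1
      refine ⟨f2, S2, ?_, hrel2⟩
      rw [ev_con (cnAlg A) x y (f, S), hev1]
      simpa using hev2
    | false =>
      obtain ⟨hP2, hr⟩ := result_ff (by simpa using h2)
      subst hP2; subst hr
      simp only [List.append_nil] at hrp hrel
      obtain ⟨f1, S1, hev1, hrel1⟩ := ihx P1 Q f S false h1 hrp hrel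
      refine ⟨f1, S1, ?_, hrel1⟩
      rw [ev_con (cnAlg A) x y (f, S), hev1]
      simp
      rfl

end Stmt19

theorem stmt_19' {A : Type} [DecidableEq A] (x : Fm A) :
    (PathSatFr x → SATfr x) ∧ (PathSatRp x → SATcn x) ∧
    (PathSatMem x → SATst x) ∧ (SATrp x ↔ SATcn x) ∧ (SATmem x ↔ SATst x) := by
  have pa : PathSatFr x → SATfr x := by
    rintro ⟨P, hP⟩
    refine ⟨Stmt19.freeAlg A, P, ?_⟩
    have h := Stmt19.freeSim x P [] true hP
    rw [List.append_nil] at h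
    show ((Stmt19.freeAlg A).ev x P).1 = true
    rw [h]
  have pb : PathSatRp x → SATcn x := by
    rintro ⟨P, hrp, hP⟩
    have hrp' : RepProofPath (P ++ []) := by rwa [List.append_nil]
    have hrel : Stmt19.Rel (fun _ => false) P (P ++ []) := Or.inl (List.append_nil P).symm
    obtain ⟨f', S', hev, -⟩ := Stmt19.cnSim x P [] (fun _ => false) P true hP hrp' hrel
    refine ⟨Stmt19.cnAlg A, Stmt19.cnAlg_contractive, (fun _ => false, P), ?_⟩
    show ((Stmt19.cnAlg A).ev x (fun _ => false, P)).1 = true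
    rw [hev]
  have pc : PathSatMem x → SATst x := by
    rintro ⟨P, hmem, hP⟩
    have hc : ∀ p ∈ P, (fun a => decide ((a, true) ∈ P)) p.1 = p.2 := by
      rintro ⟨u, b⟩ hp
      cases b with
      | true => simpa using hp
      | false =>
        simp only [decide_eq_false_iff_not]
        intro hmem'
        exact absurd (hmem u true false hmem' hp) (by simp)
    refine ⟨Stmt19.stAlg A (fun a => decide ((a, true) ∈ P)),
      Stmt19.stAlg_static _, PUnit.unit, ?_⟩
    have h := Stmt19.stSim (fun a => decide ((a, true) ∈ P)) x P true hc hP PUnit.unit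
    show ((Stmt19.stAlg A (fun a => decide ((a, true) ∈ P))).ev x PUnit.unit).1 = true
    rw [h]
  refine ⟨pa, pb, pc, ⟨?_, ?_⟩, ⟨?_, ?_⟩⟩
  · rintro ⟨u, hrp, H, h⟩
    apply pb
    refine ⟨u.epath x H, Stmt19.trace_rp hrp (Stmt19.epath_trace x H), ?_⟩
    rw [Stmt19.epath_result u x H, h]
  · rintro ⟨u, hc, H, h⟩
    exact ⟨u, hc.1, H, h⟩
  · rintro ⟨u, hm, H, h⟩
    apply pc
    refine ⟨u.epath x H, Stmt19.trace_mem hm (Stmt19.epath_trace x H), ?_⟩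
    rw [Stmt19.epath_result u x H, h]
  · rintro ⟨u, hs, H, h⟩
    exact ⟨u, hs.1, H, h⟩

/-- PathSat_fr implies SAT_fr, PathSat_rp implies SAT_cn,
PathSat_mem implies SAT_st; consequently `SAT_rp ↔ SAT_cn` and
`SAT_mem ↔ SAT_st`. -/
theorem stmt_19 {A : Type} [DecidableEq A] (x : Fm A) :
    (PathSatFr x → SATfr x) ∧ (PathSatRp x → SATcn x) ∧
    (PathSatMem x → SATst x) ∧ (SATrp x ↔ SATcn x) ∧ (SATmem x ↔ SATst x) :=
  stmt_19' x
end
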